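/- Let m ∈ (1,2] and assume U satisfies A2(m)(i), i.e., U ∈ C³(ℝ^d) and there is A₁ ≥ 0 with ‖D^k U(q)‖ ≤ A₁(1 + ‖q‖)^{m−k} for k = 2,3 and all q. Then there exists C ≥ 0 such that for all q, x ∈ ℝ^d: ‖∇U(q) − ∇U(x)‖ ≤ C min(‖q − x‖, ‖q − x‖^{m−1}). -/

import Mathlib

open Real
noncomputable section
set_option maxHeartbeats 1000000

private lemma norm_itfd_one' {E G : Type*} [NormedAddCommGroup E] [NormedSpace ℝ E]
    [NormedAddCommGroup G] [NormedSpace ℝ G] (g : E → G) (y : E) :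
    ‖iteratedFDeriv ℝ 1 g y‖ = ‖fderiv ℝ g y‖ := by
  rw [← norm_fderiv_iteratedFDeriv (n := 0), iteratedFDeriv_zero_eq_comp,
    LinearIsometryEquiv.comp_fderiv]
  exact (continuousMultilinearCurryFin0 ℝ E G).symm.toLinearIsometry.norm_toContinuousLinearMap_comp
    (g := fderiv ℝ g y)

/-- under A2(m)(i), the gradient of `U` is both Lipschitz and
`(m−1)`-Hölder. -/
theorem gradient_lipschitz_and_holder {d : ℕ}
    (U : EuclideanSpace ℝ (Fin d) → ℝ) (m : ℝ) (hm : m ∈ Set.Ioc (1 : ℝ) 2)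
    (hU : ContDiff ℝ 3 U)
    (A₁ : ℝ) (hA₁ : 0 ≤ A₁)
    (hD : ∀ q : EuclideanSpace ℝ (Fin d),
      ‖iteratedFDeriv ℝ 2 U q‖ ≤ A₁ * (1 + ‖q‖) ^ (m - 2) ∧
      ‖iteratedFDeriv ℝ 3 U q‖ ≤ A₁ * (1 + ‖q‖) ^ (m - 3)) :
    ∃ C ≥ (0 : ℝ), ∀ q x : EuclideanSpace ℝ (Fin d),
      ‖gradient U q - gradient U x‖ ≤ C * min ‖q - x‖ (‖q - x‖ ^ (m - 1)) := by
  obtain ⟨hm1, hm2⟩ := hm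
  have hm1' : (0:ℝ) < m - 1 := by linarith
  set F := fderiv ℝ U with hFdef
  have hF2 : ContDiff ℝ 2 F := hU.fderiv_right (by norm_num)
  have hFd : Differentiable ℝ F := hF2.differentiable (by norm_num)
  -- pointwise bound on the derivative of F
  have hdF : ∀ y : EuclideanSpace ℝ (Fin d), ‖fderiv ℝ F y‖ ≤ A₁ * (1 + ‖y‖) ^ (m - 2) := by
    intro y
    have h1 : ‖iteratedFDeriv ℝ 1 F y‖ = ‖fderiv ℝ F y‖ := norm_itfd_one' F y
    have h2 : ‖iteratedFDeriv ℝ 1 F y‖ = ‖iteratedFDeriv ℝ 2 U y‖ :=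
      norm_iteratedFDeriv_fderiv (𝕜 := ℝ) (f := U) (x := y) (n := 1)
    rw [← h1, h2]
    exact (hD y).1
  -- global Lipschitz bound
  have lip : ∀ q x : EuclideanSpace ℝ (Fin d), ‖F q - F x‖ ≤ A₁ * ‖q - x‖ := by
    intro q x
    refine Convex.norm_image_sub_le_of_norm_fderiv_le (fun y _ => hFd y) ?_ convex_univ
      (Set.mem_univ x) (Set.mem_univ q)
    intro y _
    refine (hdF y).trans ?_
    have h1 : (1 + ‖y‖) ^ (m - 2) ≤ 1 :=
      rpow_le_one_of_one_le_of_nonpos (by linarith [norm_nonneg y]) (by linarith)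
    nlinarith
  -- radial bound
  have rad : ∀ q : EuclideanSpace ℝ (Fin d), ‖F q - F 0‖ ≤ A₁ / (m - 1) * ((1 + ‖q‖) ^ (m - 1) - 1) := by
    intro q
    set a : ℝ := ‖q‖ with hadef
    have ha : (0:ℝ) ≤ a := norm_nonneg q
    have hpos : ∀ t : ℝ, 0 ≤ t → (0:ℝ) < 1 + t * a := by intro t ht; nlinarith
    have key := image_norm_le_of_norm_deriv_right_le_deriv_boundary'
      (f := fun t : ℝ => F (t • q) - F 0)
      (f' := fun t : ℝ => (fderiv ℝ F (t • q)) q)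
      (a := 0) (b := 1)
      (B := fun t : ℝ => A₁ / (m - 1) * ((1 + t * a) ^ (m - 1) - 1))
      (B' := fun t : ℝ => A₁ * ((1 + t * a) ^ (m - 2) * a))
      ?_ ?_ ?_ ?_ ?_ ?_
    · have := key (x := 1) (by norm_num)
      simpa using this
    · exact ((hF2.continuous.comp (continuous_id.smul continuous_const)).sub
        continuous_const).continuousOn
    · intro t ht
      have h1 : HasDerivAt (fun t : ℝ => t • q) q t := by
        simpa using (hasDerivAt_id t).smul_const q
      have h2 : HasFDerivAt F (fderiv ℝ F (t • q)) (t • q) := (hFd _).hasFDerivAt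
      exact ((h2.comp_hasDerivAt t h1).sub_const (F 0)).hasDerivWithinAt
    · simp
    · refine ContinuousOn.mul continuousOn_const (ContinuousOn.sub ?_ continuousOn_const)
      refine ContinuousOn.rpow_const
        ((continuous_const.add (continuous_id.mul continuous_const)).continuousOn) ?_
      intro t ht
      exact Or.inl (hpos t ht.1).ne'
    · intro t ht
      have hp := hpos t ht.1
      have hb : HasDerivAt (fun t : ℝ => 1 + t * a) a t := by
        simpa using ((hasDerivAt_id t).mul_const a).const_add 1
      have hr : HasDerivAt (fun x : ℝ => x ^ (m - 1)) ((m - 1) * (1 + t * a) ^ (m - 1 - 1))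
          (1 + t * a) := Real.hasDerivAt_rpow_const (Or.inl hp.ne')
      have h3 := ((hr.comp t hb).sub_const 1).const_mul (A₁ / (m - 1))
      have heq : A₁ / (m - 1) * ((m - 1) * (1 + t * a) ^ (m - 1 - 1) * a)
          = A₁ * ((1 + t * a) ^ (m - 2) * a) := by
        have : m - 1 - 1 = m - 2 := by ring
        rw [this]
        field_simp
      rw [heq] at h3
      exact h3.hasDerivWithinAt
    · intro t ht
      have hp := hpos t ht.1
      have hnt : ‖t • q‖ = t * a := by
        rw [norm_smul, Real.norm_of_nonneg ht.1]
      have h1 : ‖(fderiv ℝ F (t • q)) q‖ ≤ ‖fderiv ℝ F (t • q)‖ * a :=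
        ContinuousLinearMap.le_opNorm _ q
      refine h1.trans ?_
      have h2 : ‖fderiv ℝ F (t • q)‖ ≤ A₁ * (1 + t * a) ^ (m - 2) := by
        simpa [hnt] using hdF (t • q)
      calc ‖fderiv ℝ F (t • q)‖ * a ≤ A₁ * (1 + t * a) ^ (m - 2) * a :=
            mul_le_mul_of_nonneg_right h2 ha
        _ = A₁ * ((1 + t * a) ^ (m - 2) * a) := by ring
  -- Hölder bound for distant points, normalized so that ‖x‖ ≤ ‖q‖
  have key : ∀ q x : EuclideanSpace ℝ (Fin d), ‖x‖ ≤ ‖q‖ → 1 ≤ ‖q - x‖ →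
      ‖F q - F x‖ ≤ (A₁ + 8 * A₁ / (m - 1)) * ‖q - x‖ ^ (m - 1) := by
    intro q x hxq hr
    set r : ℝ := ‖q - x‖ with hrdef
    have hr0 : (0:ℝ) < r := by linarith
    have hrm : (0:ℝ) ≤ r ^ (m - 1) := Real.rpow_nonneg hr0.le _
    have hc0 : (0:ℝ) ≤ A₁ / (m - 1) := div_nonneg hA₁ hm1'.le
    rcases le_or_gt ‖x‖ (2 * r) with h2 | h2
    · -- both points are at distance O(r) from the origin
      have hq3 : ‖q‖ ≤ 3 * r := by
        have : ‖q‖ ≤ ‖x‖ + ‖q - x‖ := by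
          simpa using norm_add_le x (q - x)
        linarith
      have h44 : (4:ℝ) ^ (m - 1) ≤ 4 := by
        calc (4:ℝ) ^ (m - 1) ≤ (4:ℝ) ^ (1:ℝ) :=
              rpow_le_rpow_of_exponent_le (by norm_num) (by linarith)
          _ = 4 := rpow_one 4
      have hbnd : ∀ y : EuclideanSpace ℝ (Fin d), ‖y‖ ≤ 3 * r → ‖F y - F 0‖ ≤ A₁ / (m - 1) * (4 * r ^ (m - 1)) := by
        intro y hy
        refine (rad y).trans ?_
        have h4 : (1 + ‖y‖) ^ (m - 1) ≤ 4 * r ^ (m - 1) := by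
          calc (1 + ‖y‖) ^ (m - 1) ≤ (4 * r) ^ (m - 1) :=
                Real.rpow_le_rpow (by linarith [norm_nonneg y]) (by linarith) hm1'.le
            _ = 4 ^ (m - 1) * r ^ (m - 1) := Real.mul_rpow (by norm_num) hr0.le
            _ ≤ 4 * r ^ (m - 1) := mul_le_mul_of_nonneg_right h44 hrm
        nlinarith
      have b1 := hbnd q hq3
      have b2 := hbnd x (by linarith)
      have hsplit : ‖F q - F x‖ ≤ ‖F q - F 0‖ + ‖F x - F 0‖ := by
        have : F q - F x = (F q - F 0) - (F x - F 0) := by abel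
        rw [this]
        exact norm_sub_le _ _
      have h8 : A₁ / (m - 1) * (4 * r ^ (m - 1)) + A₁ / (m - 1) * (4 * r ^ (m - 1))
          = 8 * A₁ / (m - 1) * r ^ (m - 1) := by ring
      nlinarith
    · -- the segment [x, q] stays far from the origin
      have hseg : ∀ y ∈ segment ℝ x q, ‖fderiv ℝ F y‖ ≤ A₁ * r ^ (m - 2) := by
        intro y hy
        obtain ⟨u, v, hu, hv, huv, rfl⟩ := hy
        have hv1 : v ≤ 1 := by linarith
        have hyx : u • x + v • q = x + v • (q - x) := by
          have hu1 : u = 1 - v := by linarith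
          rw [hu1, smul_sub]
          module
        have hny : r ≤ ‖u • x + v • q‖ := by
          rw [hyx]
          have h5 : ‖x‖ - ‖v • (q - x)‖ ≤ ‖x + v • (q - x)‖ := by
            have := norm_add_le (x + v • (q - x)) (-(v • (q - x)))
            simpa [norm_neg] using this
          have h6 : ‖v • (q - x)‖ = v * r := by
            rw [norm_smul, Real.norm_of_nonneg hv]
          nlinarith
        refine (hdF _).trans ?_
        have h7 : (1 + ‖u • x + v • q‖) ^ (m - 2) ≤ r ^ (m - 2) :=
          rpow_le_rpow_of_nonpos hr0 (by linarith [norm_nonneg (u • x + v • q)])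
            (by linarith)
        nlinarith
      have hm2' := Convex.norm_image_sub_le_of_norm_fderiv_le (fun y _ => hFd y) hseg
        (convex_segment x q) (left_mem_segment ℝ x q) (right_mem_segment ℝ x q)
      have heq : A₁ * r ^ (m - 2) * r = A₁ * r ^ (m - 1) := by
        have hex : m - 2 + 1 = m - 1 := by ring
        rw [mul_assoc, ← Real.rpow_add_one hr0.ne' (m - 2), hex]
      rw [← hrdef, heq] at hm2'
      nlinarith [mul_nonneg (div_nonneg (by linarith : (0:ℝ) ≤ 8 * A₁) hm1'.le) hrm]
  -- full Hölder bound
  have holder : ∀ q x : EuclideanSpace ℝ (Fin d), ‖F q - F x‖ ≤ (A₁ + 8 * A₁ / (m - 1)) * ‖q - x‖ ^ (m - 1) := by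
    intro q x
    have h8 : (0:ℝ) ≤ 8 * A₁ / (m - 1) := div_nonneg (by linarith) hm1'.le
    rcases le_or_gt ‖q - x‖ 1 with h | h
    · have h1 := lip q x
      have hrm : (0:ℝ) ≤ ‖q - x‖ ^ (m - 1) := Real.rpow_nonneg (norm_nonneg _) _
      have h2 : ‖q - x‖ ≤ ‖q - x‖ ^ (m - 1) := by
        rcases eq_or_lt_of_le (norm_nonneg (q - x)) with h0 | h0
        · rw [← h0]
          exact Real.rpow_nonneg le_rfl _
        · calc ‖q - x‖ = ‖q - x‖ ^ (1:ℝ) := (Real.rpow_one _).symm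
            _ ≤ ‖q - x‖ ^ (m - 1) :=
              Real.rpow_le_rpow_of_exponent_ge h0 h (by linarith)
      nlinarith
    · rcases le_total ‖x‖ ‖q‖ with hle | hle
      · exact key q x hle h.le
      · rw [norm_sub_rev, norm_sub_rev q x]
        exact key x q hle (by rw [← norm_sub_rev]; exact h.le)
  -- conclusion
  refine ⟨A₁ + 8 * A₁ / (m - 1), by positivity, fun q x => ?_⟩
  have hgr : ‖gradient U q - gradient U x‖ = ‖F q - F x‖ := by
    rw [gradient, gradient, ← LinearIsometryEquiv.map_sub, LinearIsometryEquiv.norm_map]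
  rw [hgr]
  have h8 : (0:ℝ) ≤ 8 * A₁ / (m - 1) := div_nonneg (by linarith) hm1'.le
  rcases le_total ‖q - x‖ (‖q - x‖ ^ (m - 1)) with hmin | hmin
  · rw [min_eq_left hmin]
    have := lip q x
    nlinarith [norm_nonneg (q - x)]
  · rw [min_eq_right hmin]
    exact holder q x
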